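/- Let s_1,...,s_{n+1} be exchangeable and almost surely distinct, and for β ∈ [0,1] let q̂(β) be the ⌈(n+1)β⌉-th order statistic of s_1,...,s_n (defined when ⌈(n+1)β⌉ ≤ n). Then the map β ↦ P(s_{n+1} ≤ q̂(β)) equals ⌈(n+1)β⌉/(n+1), which is nondecreasing in β. -/

import Mathlib

open MeasureTheory

/-- A finite family of real random variables is exchangeable if its joint law is
invariant under every permutation of the indices. -/
def Exchangeable {Ω : Type*} [MeasurableSpace Ω] {m : ℕ} (P : Measure Ω)
    (s : Fin m → Ω → ℝ) : Prop :=
  ∀ σ : Equiv.Perm (Fin m),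
    Measure.map (fun ω i => s (σ i) ω) P = Measure.map (fun ω i => s i ω) P

/-- The `k`-th smallest value (0-indexed) of the tuple `v`. -/
noncomputable def orderStat {m : ℕ} (v : Fin m → ℝ) (k : Fin m) : ℝ :=
  v (Tuple.sort v k)

open Finset

noncomputable def rnk {m : ℕ} (u : Fin m → ℝ) (j : Fin m) : ℕ :=
  (univ.filter (fun i => u i < u j)).card

lemma card_filter_perm {m : ℕ} (σ : Equiv.Perm (Fin m)) (p : Fin m → Prop) [DecidablePred p] :
    (univ.filter (fun i => p (σ i))).card = (univ.filter p).card := by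
  apply Finset.card_bij (fun a _ => σ a)
  · intro a ha; simpa using (Finset.mem_filter.1 ha).2
  · intro a _ b _ h; exact σ.injective h
  · intro b hb
    exact ⟨σ.symm b, by simpa using (Finset.mem_filter.1 hb).2, by simp⟩

lemma rnk_lt {m : ℕ} (u : Fin m → ℝ) (j : Fin m) : rnk u j < m := by
  have h : (univ.filter (fun i => u i < u j)) ⊆ univ.erase j := by
    intro i hi
    rcases Finset.mem_filter.1 hi with ⟨_, hlt⟩
    refine Finset.mem_erase.2 ⟨?_, Finset.mem_univ _⟩
    rintro rfl; exact lt_irrefl _ hlt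
  calc rnk u j ≤ (univ.erase j).card := Finset.card_le_card h
    _ < m := by
        rw [Finset.card_erase_of_mem (Finset.mem_univ _)]
        simpa using Nat.sub_lt (Fin.pos j) one_pos
  -- need m > 0; j : Fin m gives it

lemma rnk_strictMonoOn {m : ℕ} {u : Fin m → ℝ} {j j' : Fin m} (h : u j < u j') :
    rnk u j < rnk u j' := by
  apply Finset.card_lt_card
  constructor
  · intro i hi
    rcases Finset.mem_filter.1 hi with ⟨_, hlt⟩
    exact Finset.mem_filter.2 ⟨Finset.mem_univ _, hlt.trans h⟩
  · intro hsub
    have hj : j ∈ univ.filter (fun i => u i < u j') := Finset.mem_filter.2 ⟨Finset.mem_univ _, h⟩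
    have := (Finset.mem_filter.1 (hsub hj)).2
    exact lt_irrefl _ this

lemma rnk_inj {m : ℕ} {u : Fin m → ℝ} (hu : Function.Injective u) :
    Function.Injective (rnk u) := by
  intro j j' h
  by_contra hne
  rcases lt_trichotomy (u j) (u j') with hlt | heq | hlt
  · exact absurd h (Nat.ne_of_lt (rnk_strictMonoOn hlt))
  · exact hne (hu heq)
  · exact absurd h.symm (Nat.ne_of_lt (rnk_strictMonoOn hlt))

lemma rnk_surj {m : ℕ} {u : Fin m → ℝ} (hu : Function.Injective u) (r : ℕ) (hr : r < m) :
    ∃ j, rnk u j = r := by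
  have hinj : Function.Injective (fun j => (⟨rnk u j, rnk_lt u j⟩ : Fin m)) := by
    intro a b hab
    exact rnk_inj hu (by simpa [Fin.ext_iff] using hab)
  have hsurj := (Finite.injective_iff_surjective.1 hinj) ⟨r, hr⟩
  rcases hsurj with ⟨j, hj⟩
  exact ⟨j, by simpa [Fin.ext_iff] using hj⟩

/-- For strictly increasing (injective via sort) tuples: `t ≤ k`-th order stat iff
at most `k` entries are `< t`. -/
lemma orderStat_iff {m : ℕ} (w : Fin m → ℝ) (hw : Function.Injective w)
    (t : ℝ) (k : Fin m) :
    t ≤ orderStat w k ↔ (univ.filter (fun i => w i < t)).card ≤ (k : ℕ) := by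
  set σ := Tuple.sort w with hσ
  have hmono : Monotone (w ∘ σ) := Tuple.monotone_sort w
  have hsm : StrictMono (w ∘ σ) := hmono.strictMono_of_injective (hw.comp σ.injective)
  have hcard : (univ.filter (fun i => w i < t)).card
      = (univ.filter (fun i => w (σ i) < t)).card := (card_filter_perm σ _).symm
  rw [hcard]
  constructor
  · intro ht
    have hsub : univ.filter (fun i => w (σ i) < t) ⊆ Finset.Iio k := by
      intro i hi
      have hlt : w (σ i) < w (σ k) := lt_of_lt_of_le (Finset.mem_filter.1 hi).2 ht
      exact Finset.mem_Iio.2 (hsm.lt_iff_lt.1 hlt)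
    calc _ ≤ (Finset.Iio k).card := Finset.card_le_card hsub
      _ = (k : ℕ) := by simp
  · intro hc
    by_contra ht
    push_neg at ht
    have hsub : Finset.Iic k ⊆ univ.filter (fun i => w (σ i) < t) := by
      intro i hi
      refine Finset.mem_filter.2 ⟨Finset.mem_univ _, ?_⟩
      exact lt_of_le_of_lt (hsm.monotone (Finset.mem_Iic.1 hi)) ht
    have := Finset.card_le_card hsub
    simp only [Fin.card_Iic] at this
    omega

lemma rnk_last {n : ℕ} (v : Fin (n+1) → ℝ) :
    rnk v (Fin.last n)
      = (univ.filter (fun i : Fin n => v i.castSucc < v (Fin.last n))).card := by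
  unfold rnk
  symm
  apply Finset.card_bij (fun (a : Fin n) _ => a.castSucc)
  · intro a ha
    exact Finset.mem_filter.2 ⟨Finset.mem_univ _, (Finset.mem_filter.1 ha).2⟩
  · intro a _ b _ h
    exact Fin.castSucc_injective n h
  · intro b hb
    have hbne : b ≠ Fin.last n := by
      rintro rfl
      exact lt_irrefl _ (Finset.mem_filter.1 hb).2
    refine ⟨b.castPred hbne, ?_, by simp⟩
    refine Finset.mem_filter.2 ⟨Finset.mem_univ _, ?_⟩
    simpa using (Finset.mem_filter.1 hb).2

lemma key_iff {n : ℕ} (v : Fin (n+1) → ℝ) (hv : Function.Injective v) (k : ℕ)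
    (h1 : 1 ≤ k) (hk : k ≤ n) :
    (v (Fin.last n) ≤ orderStat (fun i : Fin n => v i.castSucc) ⟨k-1, by omega⟩
      ↔ rnk v (Fin.last n) ≤ k - 1) := by
  have hw : Function.Injective (fun i : Fin n => v i.castSucc) :=
    hv.comp (Fin.castSucc_injective n)
  rw [rnk_last, orderStat_iff _ hw]

lemma measurable_rnk {m : ℕ} (j : Fin m) :
    Measurable (fun u : Fin m → ℝ => rnk u j) := by
  unfold rnk
  simp_rw [Finset.card_filter]
  apply Finset.measurable_sum
  intro i _
  exact Measurable.ite (measurableSet_lt (measurable_pi_apply i) (measurable_pi_apply j))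
    measurable_const measurable_const

lemma rnk_comp_perm {m : ℕ} (u : Fin m → ℝ) (σ : Equiv.Perm (Fin m)) (j : Fin m) :
    rnk (u ∘ σ) j = rnk u (σ j) := by
  unfold rnk
  exact card_filter_perm σ (fun i => u i < u (σ j))

lemma measurableSet_inj {m : ℕ} :
    MeasurableSet {u : Fin m → ℝ | Function.Injective u} := by
  have : {u : Fin m → ℝ | Function.Injective u}
      = ⋂ (i) (j), {u | i ≠ j → u i ≠ u j} := by
    ext u
    simp only [Set.mem_setOf_eq, Set.mem_iInter]
    exact ⟨fun h i j hij he => hij (h he), fun h a b he => by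
      by_contra hne; exact h a b hne he⟩
  rw [this]
  refine MeasurableSet.iInter fun i => MeasurableSet.iInter fun j => ?_
  by_cases hij : i = j
  · simp [hij]
  · have : {u : Fin m → ℝ | i ≠ j → u i ≠ u j} = {u | u i = u j}ᶜ := by
      ext u; simp [hij]
    rw [this]
    exact (measurableSet_eq_fun (measurable_pi_apply i) (measurable_pi_apply j)).compl

lemma rank_uniform {Ω : Type*} [MeasurableSpace Ω] (P : Measure Ω) [IsProbabilityMeasure P]
    {n : ℕ} (s : Fin (n + 1) → Ω → ℝ) (hmeas : ∀ i, Measurable (s i))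
    (hexch : Exchangeable P s)
    (hdist : ∀ᵐ ω ∂P, Function.Injective fun i => s i ω)
    (r : ℕ) (hr : r ≤ n) :
    (Measure.map (fun ω i => s i ω) P) {u | rnk u (Fin.last n) = r}
      = ((n : ENNReal) + 1)⁻¹ := by
  set V : Ω → (Fin (n + 1) → ℝ) := fun ω i => s i ω with hVdef
  have hV : Measurable V := measurable_pi_lambda _ hmeas
  set μ := Measure.map V P with hμdef
  have hμprob : IsProbabilityMeasure μ := Measure.isProbabilityMeasure_map hV.aemeasurable
  have hAmeas : ∀ j : Fin (n + 1), MeasurableSet {u : Fin (n+1) → ℝ | rnk u j = r} :=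
    fun j => (measurable_rnk j) (measurableSet_singleton r)
  -- Step 1: all indices give the same measure
  have hsame : ∀ j : Fin (n + 1), μ {u | rnk u j = r} = μ {u | rnk u (Fin.last n) = r} := by
    intro j
    set σ := Equiv.swap (Fin.last n) j with hσdef
    have hV' : Measurable (fun ω (i : Fin (n+1)) => s (σ i) ω) :=
      measurable_pi_lambda _ (fun i => hmeas (σ i))
    have h1 : μ {u | rnk u (Fin.last n) = r}
        = (Measure.map (fun ω (i : Fin (n+1)) => s (σ i) ω) P) {u | rnk u (Fin.last n) = r} := by
      rw [hexch σ]
    have h2 : (fun ω (i : Fin (n+1)) => s (σ i) ω) ⁻¹' {u | rnk u (Fin.last n) = r}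
        = V ⁻¹' {u | rnk u j = r} := by
      ext ω
      have : (fun i : Fin (n+1) => s (σ i) ω) = (V ω) ∘ σ := rfl
      simp only [Set.mem_preimage, Set.mem_setOf_eq, this, rnk_comp_perm]
      have hσl : σ (Fin.last n) = j := Equiv.swap_apply_left _ _
      rw [hσl]
    rw [h1, Measure.map_apply hV' (hAmeas (Fin.last n)), h2,
      ← Measure.map_apply hV (hAmeas j)]
  -- Step 2: the measures sum to 1
  have hImeas : MeasurableSet {u : Fin (n+1) → ℝ | Function.Injective u} := measurableSet_inj
  set I := {u : Fin (n+1) → ℝ | Function.Injective u} with hIdef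
  have hI1 : μ I = 1 := by
    rw [hμdef, Measure.map_apply hV hImeas]
    have : V ⁻¹' I = {ω | Function.Injective fun i => s i ω} := rfl
    rw [this]
    have hm : NullMeasurableSet {ω | Function.Injective fun i => s i ω} P :=
      (hV hImeas).nullMeasurableSet
    have := (ae_iff_measure_eq hm).1 hdist
    rwa [measure_univ] at this
  have hIc : μ Iᶜ = 0 := by
    have := measure_compl hImeas (measure_ne_top μ I)
    rw [hI1, measure_univ] at this
    simp [this]
  -- the partition
  set F : Fin (n+1) → Set (Fin (n+1) → ℝ) := fun j => {u | rnk u j = r} ∩ I with hFdef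
  have hFmeas : ∀ j, MeasurableSet (F j) := fun j => (hAmeas j).inter hImeas
  have hFdisj : Pairwise (Function.onFun Disjoint F) := by
    intro j j' hjj'
    simp only [Function.onFun]
    rw [Set.disjoint_left]
    rintro u ⟨hu1, hu2⟩ ⟨hu1', _⟩
    exact hjj' (rnk_inj hu2 (hu1.trans hu1'.symm))
  have hFunion : (⋃ j, F j) = I := by
    apply Set.Subset.antisymm
    · exact Set.iUnion_subset fun j => Set.inter_subset_right
    · intro u hu
      rcases rnk_surj hu r (by omega) with ⟨j, hj⟩
      exact Set.mem_iUnion.2 ⟨j, hj, hu⟩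
  have hsum : (∑ j : Fin (n+1), μ (F j)) = 1 := by
    rw [← tsum_fintype (L := SummationFilter.unconditional _), ← measure_iUnion hFdisj hFmeas, hFunion, hI1]
  have hFA : ∀ j, μ (F j) = μ {u | rnk u j = r} := by
    intro j
    have h := measure_inter_add_diff (μ := μ) {u : Fin (n+1) → ℝ | rnk u j = r} hImeas
    have hd : μ ({u : Fin (n+1) → ℝ | rnk u j = r} \ I) = 0 :=
      measure_mono_null (Set.diff_subset_compl _ _) hIc
    rw [hd, add_zero] at h
    exact h
  have hconst : (∑ j : Fin (n+1), μ (F j))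
      = ((n : ENNReal) + 1) * μ {u | rnk u (Fin.last n) = r} := by
    calc (∑ j : Fin (n+1), μ (F j))
        = ∑ j : Fin (n+1), μ {u | rnk u (Fin.last n) = r} := by
          refine Finset.sum_congr rfl fun j _ => ?_
          rw [hFA j, hsame j]
      _ = ((n : ENNReal) + 1) * μ {u | rnk u (Fin.last n) = r} := by
          rw [Finset.sum_const, Finset.card_univ, Fintype.card_fin, nsmul_eq_mul]
          push_cast
          ring
  rw [hconst] at hsum
  have h0 : ((n : ENNReal) + 1) ≠ 0 := by simp
  have htop : ((n : ENNReal) + 1) ≠ ⊤ := by simp [ENNReal.add_ne_top]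
  calc μ {u | rnk u (Fin.last n) = r}
      = ((n : ENNReal) + 1)⁻¹ * (((n : ENNReal) + 1) * μ {u | rnk u (Fin.last n) = r}) := by
        rw [← mul_assoc, ENNReal.inv_mul_cancel h0 htop, one_mul]
    _ = ((n : ENNReal) + 1)⁻¹ := by rw [hsum, mul_one]


/-- Coverage as a function of the nominal level: for exchangeable, a.s. distinct
scores, the probability that `s (last)` is at most the `⌈(n+1)β⌉`-th order statistic
of the first `n` scores equals `⌈(n+1)β⌉/(n+1)`, which is nondecreasing in `β`. -/
theorem conformal_coverage_step_function
    {Ω : Type*} [MeasurableSpace Ω] (P : Measure Ω) [IsProbabilityMeasure P]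
    {n : ℕ} (s : Fin (n + 1) → Ω → ℝ) (hmeas : ∀ i, Measurable (s i))
    (hexch : Exchangeable P s)
    (hdist : ∀ᵐ ω ∂P, Function.Injective fun i => s i ω) :
    (∀ β : ℝ, β ∈ Set.Icc (0 : ℝ) 1 →
      ∀ (h1 : 1 ≤ ⌈((n : ℝ) + 1) * β⌉₊) (hn : ⌈((n : ℝ) + 1) * β⌉₊ ≤ n),
        P {ω | s (Fin.last n) ω ≤
            orderStat (fun i : Fin n => s i.castSucc ω)
              ⟨⌈((n : ℝ) + 1) * β⌉₊ - 1, by omega⟩} =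
          (⌈((n : ℝ) + 1) * β⌉₊ : ENNReal) / ((n : ENNReal) + 1)) ∧
    (∀ β β' : ℝ, β ∈ Set.Icc (0 : ℝ) 1 → β' ∈ Set.Icc (0 : ℝ) 1 → β ≤ β' →
      (⌈((n : ℝ) + 1) * β⌉₊ : ENNReal) / ((n : ENNReal) + 1) ≤
        (⌈((n : ℝ) + 1) * β'⌉₊ : ENNReal) / ((n : ENNReal) + 1)) := by

  constructor
  · intro β hβ h1 hn
    set k := ⌈((n : ℝ) + 1) * β⌉₊ with hk
    set V : Ω → (Fin (n + 1) → ℝ) := fun ω i => s i ω with hVdef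
    have hV : Measurable V := measurable_pi_lambda _ hmeas
    set μ := Measure.map V P with hμdef
    have hAmeas : ∀ r : ℕ, MeasurableSet {u : Fin (n+1) → ℝ | rnk u (Fin.last n) = r} :=
      fun r => (measurable_rnk (Fin.last n)) (measurableSet_singleton r)
    set B : Set (Fin (n+1) → ℝ) := {u | rnk u (Fin.last n) ≤ k - 1} with hBdef
    have hBun : B = ⋃ r ∈ Finset.range k, {u | rnk u (Fin.last n) = r} := by
      ext u
      simp only [hBdef, Set.mem_setOf_eq, Set.mem_iUnion, Finset.mem_range]
      constructor
      · intro h; exact ⟨rnk u (Fin.last n), by omega, rfl⟩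
      · rintro ⟨r, hr, rfl⟩; omega
    have hBmeas : MeasurableSet B := by
      rw [hBun]
      exact Finset.measurableSet_biUnion _ (fun r _ => hAmeas r)
    have hμB : μ B = (k : ENNReal) * ((n : ENNReal) + 1)⁻¹ := by
      rw [hBun, measure_biUnion_finset ?disj (fun r _ => hAmeas r)]
      case disj =>
        intro r hr r' hr' hrr'
        simp only [Function.onFun]
        rw [Set.disjoint_left]
        rintro u hu hu'
        exact hrr' ((hu.symm).trans hu')
      calc ∑ r ∈ Finset.range k, μ {u | rnk u (Fin.last n) = r}
          = ∑ r ∈ Finset.range k, ((n : ENNReal) + 1)⁻¹ := by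
            refine Finset.sum_congr rfl fun r hr => ?_
            exact rank_uniform P s hmeas hexch hdist r (by
              have := Finset.mem_range.1 hr; omega)
        _ = (k : ENNReal) * ((n : ENNReal) + 1)⁻¹ := by
            rw [Finset.sum_const, Finset.card_range, nsmul_eq_mul]
    have hae : {ω | s (Fin.last n) ω ≤
            orderStat (fun i : Fin n => s i.castSucc ω)
              ⟨k - 1, by omega⟩} =ᵐ[P] V ⁻¹' B := by
      apply Filter.eventuallyEq_set.2
      filter_upwards [hdist] with ω hω
      exact key_iff (V ω) hω k h1 hn
    rw [measure_congr hae, ← Measure.map_apply hV hBmeas, ← hμdef, hμB,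
      div_eq_mul_inv]
  · intro β β' hβ hβ' hle
    apply ENNReal.div_le_div_right
    apply Nat.cast_le.2
    apply Nat.ceil_le_ceil
    have : (0:ℝ) ≤ (n : ℝ) + 1 := by positivity
    nlinarith
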